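/- Let a₁, a₂ ∈ ℝ, α₁, α₂ > 0, and let κ₁, κ₂ ∈ ℝ be arbitrary. Set η = α₂/2, let N > 4|a₂|/α₂, let γ ∈ (0,1) and C₅ > 0. Define φ₅(x,y) = C₅(ηx² + y²)^γ on U₅ = {(x,y) : x > N/2}. Then φ₅ is a Lyapunov function for L on U₅; in particular there exist C₅′, D₅ > 0 with (Lφ₅)(x,y) ≤ −C₅′·φ₅(x,y) + D₅ for all (x,y) ∈ U₅. -/

import Mathlib

open Real Filter

private lemma hbase_x (η y : ℝ) (t : ℝ) :
    HasDerivAt (fun s : ℝ => η * s ^ 2 + y ^ 2) (2 * η * t) t := by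
  have h := ((hasDerivAt_pow 2 t).const_mul η).add_const (y ^ 2)
  exact h.congr_deriv (by push_cast; ring)

private lemma hbase_y (η x : ℝ) (t : ℝ) :
    HasDerivAt (fun s : ℝ => η * x ^ 2 + s ^ 2) (2 * t) t := by
  have h := (hasDerivAt_pow 2 t).const_add (η * x ^ 2)
  exact h.congr_deriv (by push_cast; ring)

private lemma hderiv_x (C₅ η γ y t : ℝ) (ht : η * t ^ 2 + y ^ 2 ≠ 0) :
    HasDerivAt (fun s => C₅ * (η * s ^ 2 + y ^ 2) ^ γ)
      (C₅ * (2 * η * t * γ * (η * t ^ 2 + y ^ 2) ^ (γ - 1))) t :=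
  ((hbase_x η y t).rpow_const (Or.inl ht)).const_mul C₅

private lemma hderiv_y (C₅ η γ x t : ℝ) (ht : η * x ^ 2 + t ^ 2 ≠ 0) :
    HasDerivAt (fun s => C₅ * (η * x ^ 2 + s ^ 2) ^ γ)
      (C₅ * (2 * t * γ * (η * x ^ 2 + t ^ 2) ^ (γ - 1))) t :=
  ((hbase_y η x t).rpow_const (Or.inl ht)).const_mul C₅

private lemma hderiv2_x (C₅ η γ y x : ℝ) (h0 : 0 < η * x ^ 2 + y ^ 2) :
    deriv (deriv (fun s => C₅ * (η * s ^ 2 + y ^ 2) ^ γ)) x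
      = C₅ * γ * (2 * η * (η * x ^ 2 + y ^ 2) ^ (γ - 1)
          + 4 * η ^ 2 * x ^ 2 * (γ - 1) * (η * x ^ 2 + y ^ 2) ^ (γ - 2)) := by
  have hcont : ContinuousAt (fun t : ℝ => η * t ^ 2 + y ^ 2) x := by fun_prop
  have hpos : ∀ᶠ t in nhds x, 0 < η * t ^ 2 + y ^ 2 := hcont.eventually (eventually_gt_nhds h0)
  have hev : deriv (fun s => C₅ * (η * s ^ 2 + y ^ 2) ^ γ)
      =ᶠ[nhds x] fun t => C₅ * (2 * η * t * γ * (η * t ^ 2 + y ^ 2) ^ (γ - 1)) :=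
    hpos.mono fun t ht => (hderiv_x C₅ η γ y t ht.ne').deriv
  rw [Filter.EventuallyEq.deriv_eq hev]
  have hv : HasDerivAt (fun t : ℝ => (η * t ^ 2 + y ^ 2) ^ (γ - 1))
      (2 * η * x * (γ - 1) * (η * x ^ 2 + y ^ 2) ^ (γ - 1 - 1)) x :=
    (hbase_x η y x).rpow_const (Or.inl h0.ne')
  have hG := ((hasDerivAt_id' (x := x)).mul hv).const_mul (C₅ * (2 * η * γ))
  have hfun : (fun t => C₅ * (2 * η * t * γ * (η * t ^ 2 + y ^ 2) ^ (γ - 1)))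
      = fun t : ℝ => C₅ * (2 * η * γ) * (t * (η * t ^ 2 + y ^ 2) ^ (γ - 1)) := by
    funext t; ring
  rw [hfun, HasDerivAt.deriv (f := fun t : ℝ => C₅ * (2 * η * γ) * (t * (η * t ^ 2 + y ^ 2) ^ (γ - 1))) hG]
  have h12 : γ - 1 - 1 = γ - 2 := by ring
  rw [h12]
  ring

private lemma hderiv2_y (C₅ η γ x y : ℝ) (h0 : ∀ t : ℝ, 0 < η * x ^ 2 + t ^ 2) :
    deriv (deriv (fun s => C₅ * (η * x ^ 2 + s ^ 2) ^ γ)) y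
      = C₅ * γ * (2 * (η * x ^ 2 + y ^ 2) ^ (γ - 1)
          + 4 * y ^ 2 * (γ - 1) * (η * x ^ 2 + y ^ 2) ^ (γ - 2)) := by
  have hev : deriv (fun s => C₅ * (η * x ^ 2 + s ^ 2) ^ γ)
      =ᶠ[nhds y] fun t => C₅ * (2 * t * γ * (η * x ^ 2 + t ^ 2) ^ (γ - 1)) :=
    Filter.Eventually.of_forall fun t => (hderiv_y C₅ η γ x t (h0 t).ne').deriv
  rw [Filter.EventuallyEq.deriv_eq hev]
  have hv : HasDerivAt (fun t : ℝ => (η * x ^ 2 + t ^ 2) ^ (γ - 1))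
      (2 * y * (γ - 1) * (η * x ^ 2 + y ^ 2) ^ (γ - 1 - 1)) y :=
    (hbase_y η x y).rpow_const (Or.inl (h0 y).ne')
  have hG := ((hasDerivAt_id' (x := y)).mul hv).const_mul (C₅ * (2 * γ))
  have hfun : (fun t => C₅ * (2 * t * γ * (η * x ^ 2 + t ^ 2) ^ (γ - 1)))
      = fun t : ℝ => C₅ * (2 * γ) * (t * (η * x ^ 2 + t ^ 2) ^ (γ - 1)) := by
    funext t; ring
  rw [hfun, HasDerivAt.deriv (f := fun t : ℝ => C₅ * (2 * γ) * (t * (η * x ^ 2 + t ^ 2) ^ (γ - 1))) hG]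
  have h12 : γ - 1 - 1 = γ - 2 := by ring
  rw [h12]
  ring


set_option maxHeartbeats 2000000 in
private lemma keypoly (a₁ a₂ α₁ η κ₁ κ₂ γ c x y : ℝ)
    (hη' : 0 < η) (hα₁ : 0 < α₁) (hγ₁ : 0 < γ) (hγ₂ : γ < 1) (hx0 : 0 < x)
    (hc : 0 < c) (step2 : c ≤ 2 * (η * x - a₂)) :
    (η * x ^ 2 + y ^ 2) * (2 * η * x * (a₁ * x - α₁ * x ^ 2 + y ^ 2)
        + 2 * y * (a₂ * y - 2 * η * x * y) + 2 * η * κ₁ + 2 * κ₂)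
      + 4 * (γ - 1) * (κ₁ * η ^ 2 * x ^ 2 + κ₂ * y ^ 2)
    ≤ -c * (η * x ^ 2 + y ^ 2) ^ 2
      + (η * |2 * a₁ + c| ^ 3 / (27 * α₁ ^ 2) + 2 * η * |κ₁| + 2 * |κ₂|
          + 4 * (|κ₁| * η + |κ₂|)) * (η * x ^ 2 + y ^ 2) := by
  have hr : 0 < η * x ^ 2 + y ^ 2 := by
    nlinarith [mul_pos hη' (pow_pos hx0 2), sq_nonneg y]
  have hb : 2 * a₁ + c ≤ |2 * a₁ + c| := le_abs_self _
  have hb0 : 0 ≤ |2 * a₁ + c| := abs_nonneg _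
  have hfac : 0 ≤ (|2 * a₁ + c| - 3 * α₁ * x) ^ 2 * (|2 * a₁ + c| + 6 * α₁ * x) :=
    mul_nonneg (sq_nonneg _) (by nlinarith [mul_pos hα₁ hx0])
  have step1 : η * x ^ 2 * ((2 * a₁ + c) - 2 * α₁ * x)
      ≤ η * |2 * a₁ + c| ^ 3 / (27 * α₁ ^ 2) := by
    rw [le_div_iff₀ (by positivity)]
    nlinarith [mul_nonneg hη'.le hfac,
      mul_nonneg (mul_nonneg hη'.le (sq_nonneg x)) (sub_nonneg.mpr hb)]
  have step2' := mul_le_mul_of_nonneg_right step2 (sq_nonneg y)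
  have hconst : 2 * η * κ₁ + 2 * κ₂ ≤ 2 * η * |κ₁| + 2 * |κ₂| := by
    nlinarith [mul_nonneg hη'.le (sub_nonneg.mpr (le_abs_self κ₁)), le_abs_self κ₂]
  have hg1 : (γ - 1) * κ₁ ≤ |κ₁| := by
    nlinarith [le_abs_self κ₁, neg_abs_le κ₁, abs_nonneg κ₁]
  have hg2 : (γ - 1) * κ₂ ≤ |κ₂| := by
    nlinarith [le_abs_self κ₂, neg_abs_le κ₂, abs_nonneg κ₂]
  have hB : 4 * (γ - 1) * (κ₁ * η ^ 2 * x ^ 2 + κ₂ * y ^ 2)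
      ≤ 4 * (|κ₁| * η + |κ₂|) * (η * x ^ 2 + y ^ 2) := by
    nlinarith [mul_le_mul_of_nonneg_right hg1 (by positivity : (0:ℝ) ≤ η ^ 2 * x ^ 2),
      mul_le_mul_of_nonneg_right hg2 (sq_nonneg y),
      mul_nonneg (mul_nonneg (abs_nonneg κ₁) hη'.le) (sq_nonneg y),
      mul_nonneg (mul_nonneg (abs_nonneg κ₂) hη'.le) (sq_nonneg x)]
  have hA : 2 * η * x * (a₁ * x - α₁ * x ^ 2 + y ^ 2)
        + 2 * y * (a₂ * y - 2 * η * x * y) + 2 * η * κ₁ + 2 * κ₂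
      ≤ -c * (η * x ^ 2 + y ^ 2)
        + (η * |2 * a₁ + c| ^ 3 / (27 * α₁ ^ 2) + 2 * η * |κ₁| + 2 * |κ₂|) := by
    nlinarith [step1, step2', hconst]
  have hrA := mul_le_mul_of_nonneg_left hA hr.le
  nlinarith [hrA, hB]

noncomputable def Lop (a₁ a₂ α₁ α₂ κ₁ κ₂ : ℝ) (Φ : ℝ × ℝ → ℝ) (p : ℝ × ℝ) : ℝ :=
  (a₁ * p.1 - α₁ * p.1 ^ 2 + p.2 ^ 2) * deriv (fun t => Φ (t, p.2)) p.1
    + (a₂ * p.2 - α₂ * p.1 * p.2) * deriv (fun t => Φ (p.1, t)) p.2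
    + κ₁ * deriv (deriv (fun t => Φ (t, p.2))) p.1
    + κ₂ * deriv (deriv (fun t => Φ (p.1, t))) p.2

/-- `φ` is a Lyapunov function for the operator `L` (with the given parameters) on `U`:
(I) `φ` is `C^∞` on `U`; (II) `φ z → ∞` as `|z| → ∞`, `z ∈ U`;
(III) there are `C, D > 0` with `Lφ ≤ -C•φ + D` on `U`. -/
def IsLyapunovOn (a₁ a₂ α₁ α₂ κ₁ κ₂ : ℝ) (φ : ℝ × ℝ → ℝ) (U : Set (ℝ × ℝ)) : Prop :=
  ContDiffOn ℝ (⊤ : ℕ∞) φ U ∧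
    (∀ M : ℝ, ∃ R : ℝ, ∀ z ∈ U, R < ‖z‖ → M < φ z) ∧
    (∃ C > (0:ℝ), ∃ D > (0:ℝ), ∀ z ∈ U, Lop a₁ a₂ α₁ α₂ κ₁ κ₂ φ z ≤ -C * φ z + D)
noncomputable def phi5 (C₅ η γ : ℝ) (p : ℝ × ℝ) : ℝ :=
  C₅ * (η * p.1 ^ 2 + p.2 ^ 2) ^ γ

def U5 (N : ℝ) : Set (ℝ × ℝ) := {p : ℝ × ℝ | N / 2 < p.1}

set_option maxHeartbeats 1000000 in
/-- `φ₅` is a Lyapunov function on `U₅`. -/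
theorem statement6 (a₁ a₂ α₁ α₂ κ₁ κ₂ η N γ C₅ : ℝ)
    (hα₁ : 0 < α₁) (hα₂ : 0 < α₂) (hη : η = α₂ / 2)
    (hN : 4 * |a₂| / α₂ < N) (hγ₁ : 0 < γ) (hγ₂ : γ < 1) (hC₅ : 0 < C₅) :
    IsLyapunovOn a₁ a₂ α₁ α₂ κ₁ κ₂ (phi5 C₅ η γ) (U5 N) ∧
      ∃ C₅' > (0:ℝ), ∃ D₅ > (0:ℝ), ∀ p ∈ U5 N,
        Lop a₁ a₂ α₁ α₂ κ₁ κ₂ (phi5 C₅ η γ) p ≤ -C₅' * phi5 C₅ η γ p + D₅ := by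
  have hη' : 0 < η := by rw [hη]; positivity
  have hα₂eq : α₂ = 2 * η := by rw [hη]; ring
  have hN0 : 0 < N := lt_of_le_of_lt (by positivity) hN
  have hN4 : 4 * |a₂| < N * α₂ := by
    rw [div_lt_iff₀ hα₂] at hN; linarith
  -- the constants
  set c : ℝ := η * N / 2 - |a₂| with hcdef
  have hc : 0 < c := by
    rw [hcdef]; rw [hα₂eq] at hN4; linarith
  set K' : ℝ := η * |2 * a₁ + c| ^ 3 / (27 * α₁ ^ 2) + 2 * η * |κ₁| + 2 * |κ₂|
      + 4 * (|κ₁| * η + |κ₂|) with hK'def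
  have hK' : 0 ≤ K' := by
    rw [hK'def]
    have h1 : 0 ≤ η * |2 * a₁ + c| ^ 3 / (27 * α₁ ^ 2) :=
      div_nonneg (mul_nonneg hη'.le (by positivity)) (by positivity)
    have h2 : 0 ≤ 2 * η * |κ₁| := by
      have := abs_nonneg κ₁; nlinarith
    have h3 : 0 ≤ 2 * |κ₂| := by positivity
    have h4 : 0 ≤ 4 * (|κ₁| * η + |κ₂|) := by
      have := abs_nonneg κ₁; have := abs_nonneg κ₂; nlinarith
    linarith
  have hm₀ : 0 < η * (N / 2) ^ 2 := by positivity
  set D : ℝ := C₅ * γ * (K' + 1) * (η * (N / 2) ^ 2) ^ (γ - 1) with hDdef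
  have hD : 0 < D := by
    rw [hDdef]
    have := Real.rpow_pos_of_pos hm₀ (γ - 1)
    have h5 : 0 < K' + 1 := by linarith
    positivity
  have hCpos : 0 < c * γ := mul_pos hc hγ₁
  -- main pointwise bound
  have hbound : ∀ p ∈ U5 N, Lop a₁ a₂ α₁ α₂ κ₁ κ₂ (phi5 C₅ η γ) p
      ≤ -(c * γ) * phi5 C₅ η γ p + D := by
    rintro ⟨x, y⟩ hp
    have hx : N / 2 < x := hp
    have hx0 : 0 < x := lt_trans (by linarith) hx
    have hr : 0 < η * x ^ 2 + y ^ 2 := by nlinarith [mul_pos hη' (pow_pos hx0 2), sq_nonneg y]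
    have step2 : c ≤ 2 * (η * x - a₂) := by
      rw [hcdef]
      nlinarith [mul_pos hη' (show 0 < x - N / 2 by linarith), le_abs_self a₂]
    have hm₀le : η * (N / 2) ^ 2 ≤ η * x ^ 2 + y ^ 2 := by
      nlinarith [mul_pos hη' (show (0:ℝ) < (x - N / 2) * (x + N / 2) by nlinarith),
        sq_nonneg y]
    have hD1 := (hderiv_x C₅ η γ y x hr.ne').deriv
    have hD2 := (hderiv_y C₅ η γ x y hr.ne').deriv
    have hD3 := hderiv2_x C₅ η γ y x hr
    have hD4 := hderiv2_y C₅ η γ x y (fun t => by nlinarith [mul_pos hη' (pow_pos hx0 2), sq_nonneg t])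
    have h1 : (η * x ^ 2 + y ^ 2) ^ (γ - 1)
        = (η * x ^ 2 + y ^ 2) ^ (γ - 2) * (η * x ^ 2 + y ^ 2) := by
      have e : γ - 1 = (γ - 2) + 1 := by ring
      rw [e, Real.rpow_add hr, Real.rpow_one]
    have h2 : (η * x ^ 2 + y ^ 2) ^ γ
        = (η * x ^ 2 + y ^ 2) ^ (γ - 2) * (η * x ^ 2 + y ^ 2) ^ (2 : ℕ) := by
      rw [← Real.rpow_natCast (η * x ^ 2 + y ^ 2) 2, ← Real.rpow_add hr]
      norm_num
    have hLop : Lop a₁ a₂ α₁ α₂ κ₁ κ₂ (phi5 C₅ η γ) (x, y)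
        = C₅ * γ * ((η * x ^ 2 + y ^ 2) ^ (γ - 2))
          * ((η * x ^ 2 + y ^ 2) * (2 * η * x * (a₁ * x - α₁ * x ^ 2 + y ^ 2)
              + 2 * y * (a₂ * y - α₂ * x * y) + 2 * η * κ₁ + 2 * κ₂)
            + 4 * (γ - 1) * (κ₁ * η ^ 2 * x ^ 2 + κ₂ * y ^ 2)) := by
      simp only [Lop, phi5]
      rw [hD1, hD2, hD3, hD4, h1]
      ring
    have hphi : phi5 C₅ η γ (x, y)
        = C₅ * ((η * x ^ 2 + y ^ 2) ^ (γ - 2) * (η * x ^ 2 + y ^ 2) ^ (2 : ℕ)) := by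
      simp only [phi5]
      rw [h2]
    rw [hLop, hphi]
    set s := (η * x ^ 2 + y ^ 2) ^ (γ - 2) with hsdef
    have hs : 0 < s := Real.rpow_pos_of_pos hr _
    have hpoly := keypoly a₁ a₂ α₁ η κ₁ κ₂ γ c x y hη' hα₁ hγ₁ hγ₂ hx0 hc step2
    rw [← hK'def] at hpoly
    rw [hα₂eq]
    have hle : s * (η * x ^ 2 + y ^ 2) ≤ (η * (N / 2) ^ 2) ^ (γ - 1) := by
      rw [← h1]
      exact Real.rpow_le_rpow_of_nonpos hm₀ hm₀le (by linarith)
    have hcoef : 0 ≤ C₅ * γ * s := mul_nonneg (mul_nonneg hC₅.le hγ₁.le) hs.le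
    have hmain := mul_le_mul_of_nonneg_left hpoly hcoef
    have hTpos : 0 < C₅ * γ * (η * (N / 2) ^ 2) ^ (γ - 1) :=
      mul_pos (mul_pos hC₅ hγ₁) (Real.rpow_pos_of_pos hm₀ _)
    have hK'le := mul_le_mul_of_nonneg_left hle
      (mul_nonneg (mul_nonneg hC₅.le hγ₁.le) hK')
    refine le_trans hmain ?_
    have e1 : C₅ * γ * s * (-c * (η * x ^ 2 + y ^ 2) ^ 2 + K' * (η * x ^ 2 + y ^ 2))
        = -(c * γ) * (C₅ * (s * (η * x ^ 2 + y ^ 2) ^ 2))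
          + C₅ * γ * K' * (s * (η * x ^ 2 + y ^ 2)) := by ring
    rw [e1, hDdef]
    linarith only [hK'le, hTpos]
  -- assemble
  have hIII : ∃ C > (0:ℝ), ∃ D' > (0:ℝ), ∀ z ∈ U5 N,
      Lop a₁ a₂ α₁ α₂ κ₁ κ₂ (phi5 C₅ η γ) z ≤ -C * phi5 C₅ η γ z + D' :=
    ⟨c * γ, hCpos, D, hD, fun z hz => by have := hbound z hz; linarith⟩
  have hsmooth : ContDiffOn ℝ (⊤ : ℕ∞) (phi5 C₅ η γ) (U5 N) := by
    intro p hp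
    apply ContDiffAt.contDiffWithinAt
    have hx0 : 0 < p.1 := lt_trans (by linarith) hp
    have hne : η * p.1 ^ 2 + p.2 ^ 2 ≠ 0 :=
      (by nlinarith [mul_pos hη' (pow_pos hx0 2), sq_nonneg p.2] :
        0 < η * p.1 ^ 2 + p.2 ^ 2).ne'
    have h1 : ContDiffAt ℝ (⊤ : ℕ∞) (fun q : ℝ × ℝ => η * q.1 ^ 2 + q.2 ^ 2) p := by
      apply ContDiff.contDiffAt; fun_prop
    exact contDiffAt_const.mul (h1.rpow_const_of_ne hne)
  have hcoer : ∀ M : ℝ, ∃ R : ℝ, ∀ z ∈ U5 N, R < ‖z‖ → M < phi5 C₅ η γ z := by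
    intro M
    have hm0 : 0 < min η 1 := lt_min hη' one_pos
    have h1 : Tendsto (fun t : ℝ => C₅ * (min η 1 * t ^ 2) ^ γ) atTop atTop := by
      apply Tendsto.const_mul_atTop hC₅
      exact (tendsto_rpow_atTop hγ₁).comp
        (Tendsto.const_mul_atTop hm0 (tendsto_pow_atTop two_ne_zero))
    have h2 := (h1.eventually (eventually_gt_atTop M))
    rw [eventually_atTop] at h2
    obtain ⟨R, hR⟩ := h2
    refine ⟨R, fun z _ hRz => ?_⟩
    have hz2 : ‖z‖ ^ 2 ≤ z.1 ^ 2 + z.2 ^ 2 := by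
      have hn : ‖z‖ = max |z.1| |z.2| := by
        rw [Prod.norm_def]; simp [Real.norm_eq_abs]
      rcases le_total |z.1| |z.2| with h | h
      · rw [hn, max_eq_right h]; nlinarith [sq_abs z.2, sq_nonneg z.1]
      · rw [hn, max_eq_left h]; nlinarith [sq_abs z.1, sq_nonneg z.2]
    have hmr : min η 1 * ‖z‖ ^ 2 ≤ η * z.1 ^ 2 + z.2 ^ 2 := by
      nlinarith [mul_nonneg hm0.le (sub_nonneg.mpr hz2),
        mul_nonneg (sub_nonneg.mpr (min_le_left η 1)) (sq_nonneg z.1),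
        mul_nonneg (sub_nonneg.mpr (min_le_right η 1)) (sq_nonneg z.2)]
    have hphi : C₅ * (min η 1 * ‖z‖ ^ 2) ^ γ ≤ phi5 C₅ η γ z := by
      simp only [phi5]
      exact mul_le_mul_of_nonneg_left
        (Real.rpow_le_rpow (by positivity) hmr hγ₁.le) hC₅.le
    have := hR ‖z‖ hRz.le
    linarith
  exact ⟨⟨hsmooth, hcoer, hIII⟩, hIII⟩
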